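/- arXiv:1403.1553 — 3 statements merged into one kernel-verified Lean document; each statement's English description precedes it below -/
import Mathlib

section
/- If F is a decreasing filtration and U an increasing filtration on a finite-dimensional complex vector space H such that Gr_F^p Gr_q^U H = 0 for all p ≠ q, then H = F^p ⊕ U_{p-1} for every integer p. -/
section Aux

variable {H : Type*} [AddCommGroup H] [Module ℂ H] [FiniteDimensional ℂ H]

/-- An antitone, separated filtration on a finite-dimensional space is eventually `⊥`. -/
lemma aux_antitone_eventually_bot (F : ℤ → Submodule ℂ H) (hF : Antitone F)
    (hsep : (⨅ p, F p) = ⊥) : ∃ b : ℤ, ∀ p, b ≤ p → F p = ⊥ := by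
  obtain ⟨p₀, hp₀⟩ : ∃ p₀ : ℤ, Module.finrank ℂ (F p₀) =
      sInf (Set.range fun p => Module.finrank ℂ (F p)) :=
    Nat.sInf_mem (Set.range_nonempty _)
  have hstab : ∀ p, p₀ ≤ p → F p = F p₀ := by
    intro p hp
    exact Submodule.eq_of_le_of_finrank_le (hF hp)
      (hp₀ ▸ Nat.sInf_le (Set.mem_range_self p))
  have hbot : F p₀ = ⊥ := by
    rw [← hsep]
    refine le_antisymm (le_iInf fun p => ?_) (iInf_le _ _)
    rcases le_total p p₀ with h | h
    · exact hF h
    · exact (hstab p h).ge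
  exact ⟨p₀, fun p hp => (hstab p hp).trans hbot⟩

/-- An antitone, exhaustive filtration on a finite-dimensional space is eventually `⊤`
(towards `-∞`). -/
lemma aux_antitone_eventually_top (F : ℤ → Submodule ℂ H) (hF : Antitone F)
    (hexh : (⨆ p, F p) = ⊤) : ∃ a : ℤ, ∀ p, p ≤ a → F p = ⊤ := by
  obtain ⟨p₀, hp₀⟩ : ∃ p₀ : ℤ, Module.finrank ℂ (F p₀) =
      sSup (Set.range fun p => Module.finrank ℂ (F p)) := by
    refine Nat.sSup_mem (Set.range_nonempty _) ⟨Module.finrank ℂ H, ?_⟩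
    rintro n ⟨p, rfl⟩
    exact Submodule.finrank_le (F p)
  have hbdd : BddAbove (Set.range fun p => Module.finrank ℂ (F p)) := by
    refine ⟨Module.finrank ℂ H, ?_⟩
    rintro n ⟨p, rfl⟩
    exact Submodule.finrank_le (F p)
  have hstab : ∀ p, p ≤ p₀ → F p = F p₀ := by
    intro p hp
    refine (Submodule.eq_of_le_of_finrank_le (hF hp) ?_).symm
    rw [hp₀]
    exact le_csSup hbdd (Set.mem_range_self p)
  have htop : F p₀ = ⊤ := by
    rw [← hexh]
    refine le_antisymm (le_iSup _ _) (iSup_le fun p => ?_)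
    rcases le_total p p₀ with h | h
    · exact (hstab p h).le
    · exact hF h
  exact ⟨p₀, fun p hp => (hstab p hp).trans htop⟩

end Aux

/-- If `F` is a decreasing (exhaustive, separated) filtration and `U` an increasing
(exhaustive, separated) filtration on a finite-dimensional complex vector space `H`
such that `Gr_F^p Gr_q^U H = 0` for all `p ≠ q` (expressed without quotients:
`F p ⊓ U q ≤ (F (p+1) ⊓ U q) ⊔ (F p ⊓ U (q-1))`), then `H = F^p ⊕ U_{p-1}` for every `p`. -/
theorem opposite_filtrations_gives_splitting
    (H : Type*) [AddCommGroup H] [Module ℂ H] [FiniteDimensional ℂ H]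
    (F U : ℤ → Submodule ℂ H)
    (hF : Antitone F) (hFexh : (⨆ p, F p) = ⊤) (hFsep : (⨅ p, F p) = ⊥)
    (hU : Monotone U) (hUexh : (⨆ q, U q) = ⊤) (hUsep : (⨅ q, U q) = ⊥)
    (hopp : ∀ p q : ℤ, p ≠ q →
      F p ⊓ U q ≤ (F (p + 1) ⊓ U q) ⊔ (F p ⊓ U (q - 1))) :
    ∀ p : ℤ, IsCompl (F p) (U (p - 1)) := by
  -- Stabilization bounds
  obtain ⟨b, hb⟩ := aux_antitone_eventually_bot F hF hFsep
  obtain ⟨a, ha⟩ := aux_antitone_eventually_top F hF hFexh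
  -- Apply the antitone lemmas to `q ↦ U (-q)` to get bounds for `U`.
  have hU' : Antitone fun q : ℤ => U (-q) := fun x y h => hU (neg_le_neg h)
  have hUsep' : (⨅ q : ℤ, U (-q)) = ⊥ := by
    rw [← hUsep]
    refine le_antisymm (le_iInf fun q => iInf_le_of_le (-q) (by simp))
      (le_iInf fun q => iInf_le _ _)
  have hUexh' : (⨆ q : ℤ, U (-q)) = ⊤ := by
    rw [← hUexh]
    refine le_antisymm (iSup_le fun q => le_iSup _ _)
      (iSup_le fun q => le_iSup_of_le (-q) (by simp))
  obtain ⟨c', hc'⟩ := aux_antitone_eventually_bot (fun q => U (-q)) hU' hUsep'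
  obtain ⟨d', hd'⟩ := aux_antitone_eventually_top (fun q => U (-q)) hU' hUexh'
  -- `U q = ⊥` for `q ≤ c` and `U q = ⊤` for `d ≤ q`.
  have hc : ∀ q, q ≤ -c' → U q = ⊥ := fun q hq => by
    have := hc' (-q) (by omega); simpa using this
  have hd : ∀ q, -d' ≤ q → U q = ⊤ := fun q hq => by
    have := hd' (-q) (by omega); simpa using this
  set c : ℤ := -c' with hcdef
  set d : ℤ := -d' with hddef
  -- Step 1: F p ⊓ U q = ⊥ for q < p.
  have key1 : ∀ q p : ℤ, q < p → F p ⊓ U q = ⊥ := by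
    have main : ∀ q : ℤ, c ≤ q → ∀ p : ℤ, q < p → F p ⊓ U q = ⊥ := by
      refine Int.le_induction ?_ ?_
      · intro p _; rw [hc c le_rfl, inf_bot_eq]
      · intro q hq IH p hp
        have climb : ∀ p' : ℤ, p ≤ p' → F p ⊓ U (q + 1) ≤ F p' ⊓ U (q + 1) := by
          refine Int.le_induction le_rfl ?_
          intro p' hp' IH2
          refine IH2.trans ?_
          have h1 := hopp p' (q + 1) (by omega)
          have h2 : F p' ⊓ U (q + 1 - 1) = ⊥ := by
            rw [show q + 1 - 1 = q by ring]
            exact IH p' (by omega)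
          rw [h2, sup_bot_eq] at h1
          exact h1
        have hfin := climb (max p b) (le_max_left _ _)
        rw [hb (max p b) (le_max_right _ _), bot_inf_eq] at hfin
        exact le_bot_iff.mp hfin
    intro q p hqp
    rcases le_total c q with h | h
    · exact main q h p hqp
    · rw [show U q = ⊥ from le_bot_iff.mp ((hU h).trans (hc c le_rfl).le), inf_bot_eq]
  have key2 : ∀ p : ℤ, F p ⊔ U (p - 1) = ⊤ := by
    intro p
    have claim : ∀ p' : ℤ, p' ≤ p → F p' ≤ F p ⊔ U (p - 1) := by
      refine Int.le_induction_down le_sup_left ?_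
      intro p' hp' IH
      set r : ℤ := p' - 1 with hrdef
      have sub : ∀ q : ℤ, r ≤ q → F r ⊓ U q ≤ F (r + 1) ⊔ (F r ⊓ U r) := by
        refine Int.le_induction le_sup_right ?_
        intro q hq IH2
        have h1 := hopp r (q + 1) (by omega)
        refine h1.trans (sup_le ?_ ?_)
        · exact inf_le_left.trans le_sup_left
        · rw [show q + 1 - 1 = q by ring]
          exact IH2
      have hq0 : F r ⊓ U (max r d) ≤ F (r + 1) ⊔ (F r ⊓ U r) :=
        sub (max r d) (le_max_left _ _)
      rw [hd (max r d) (le_max_right _ _), inf_top_eq] at hq0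
      have hr1 : F (r + 1) = F p' := by rw [show r + 1 = p' by omega]
      rw [hr1] at hq0
      calc F (p' - 1) = F r := by rw [hrdef]
        _ ≤ F p' ⊔ (F r ⊓ U r) := hq0
        _ ≤ (F p ⊔ U (p - 1)) ⊔ U (p - 1) := by
            refine sup_le_sup IH (inf_le_right.trans (hU (by omega)))
        _ = F p ⊔ U (p - 1) := by rw [sup_assoc, sup_idem]
    have := claim (min p a) (min_le_left _ _)
    rw [ha (min p a) (min_le_right _ _)] at this
    exact le_antisymm le_top this
  intro p
  exact ⟨disjoint_iff.mpr (key1 (p - 1) p (by omega)),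
    codisjoint_iff.mpr (key2 p)⟩
end

section
/- Let S be a nondegenerate bilinear form on a finite-dimensional vector space V over a field of characteristic zero, and N a nilpotent endomorphism which is an infinitesimal isometry of S, i.e. S(Nx, y) + S(x, Ny) = 0 for all x, y. Let W be the monodromy weight filtration of N. Then for each l ≥ 0 the form S_l(u, v) := S(u, N^l v) induces a well-defined bilinear form on Gr_l^W V, and its restriction to the primitive part P_l = ker(N^{l+1} : Gr_l^W V → Gr_{-l-2}^W V) is nondegenerate. -/
open Submodule

/-- `W` is the monodromy weight filtration of the nilpotent endomorphism `N`, centered at 0. -/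
def IsWeightFiltration {k : Type*} [Field k] {V : Type*} [AddCommGroup V] [Module k V]
    (N : Module.End k V) (W : ℤ → Submodule k V) : Prop :=
  Monotone W ∧ (⨆ l, W l) = ⊤ ∧ (⨅ l, W l) = ⊥ ∧
  (∀ l : ℤ, Submodule.map N (W l) ≤ W (l - 2)) ∧
  (∀ l : ℕ, Submodule.map (N ^ l) (W l) ⊔ W (-(l : ℤ) - 1) = W (-(l : ℤ)) ∧
    W l ⊓ Submodule.comap (N ^ l) (W (-(l : ℤ) - 1)) = W ((l : ℤ) - 1))

section WeightAux

open Module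

variable {k : Type*} [Field k] {V : Type*} [AddCommGroup V] [Module k V]

lemma aux_powS (S : V →ₗ[k] V →ₗ[k] k) (N : Module.End k V)
    (hinf : ∀ x y : V, S (N x) y + S x (N y) = 0) :
    ∀ (m : ℕ) (x y : V), S ((N ^ m) x) y = (-1 : k) ^ m * S x ((N ^ m) y) := by
  intro m
  induction m with
  | zero => intro x y; simp
  | succ m ih =>
    intro x y
    have h1 : (N ^ (m + 1)) x = (N ^ m) (N x) := by
      rw [pow_succ, Module.End.mul_apply]
    have h2 : (N ^ (m + 1)) y = N ((N ^ m) y) := by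
      rw [pow_succ', Module.End.mul_apply]
    rw [h1, ih (N x) y, h2]
    have h3 := hinf x ((N ^ m) y)
    have h4 : S (N x) ((N ^ m) y) = - S x (N ((N ^ m) y)) := by linear_combination h3
    rw [h4]; ring

lemma aux_mapPow (N : Module.End k V) (W : ℤ → Submodule k V)
    (hNW : ∀ l : ℤ, Submodule.map N (W l) ≤ W (l - 2)) :
    ∀ (m : ℕ) (a : ℤ) (x : V), x ∈ W a → (N ^ m) x ∈ W (a - 2 * m) := by
  intro m
  induction m with
  | zero => intro a x hx; simpa using hx
  | succ m ih =>
    intro a x hx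
    have h1 : (N ^ (m + 1)) x = (N ^ m) (N x) := by
      rw [pow_succ, Module.End.mul_apply]
    have h2 : N x ∈ W (a - 2) := hNW a (Submodule.mem_map_of_mem hx)
    have h3 := ih (a - 2) (N x) h2
    have h4 : a - 2 - 2 * (m : ℤ) = a - 2 * ((m : ℕ) + 1 : ℕ) := by push_cast; ring
    rw [h4] at h3
    rw [h1]; exact h3

lemma aux_bot [FiniteDimensional k V] (W : ℤ → Submodule k V) (hmono : Monotone W)
    (hinfW : (⨅ l, W l) = ⊥) : ∃ l0 : ℤ, ∀ j ≤ l0, W j = ⊥ := by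
  have hne : (Set.range fun l => finrank k (W l)).Nonempty := ⟨_, ⟨0, rfl⟩⟩
  obtain ⟨l0, hl0⟩ := Nat.sInf_mem hne
  have hmin : ∀ j : ℤ, finrank k (W l0) ≤ finrank k (W j) := fun j =>
    le_of_eq_of_le hl0 (Nat.sInf_le ⟨j, rfl⟩)
  have heq : ∀ j ≤ l0, W j = W l0 := fun j hj =>
    Submodule.eq_of_le_of_finrank_le (hmono hj) (hmin j)
  have hbot : W l0 = ⊥ := by
    rw [← hinfW]
    refine le_antisymm (le_iInf fun j => ?_) (iInf_le _ l0)
    rcases le_total j l0 with h | h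
    · exact (heq j h).ge
    · exact hmono h
  exact ⟨l0, fun j hj => (heq j hj).trans hbot⟩

lemma aux_top [FiniteDimensional k V] (W : ℤ → Submodule k V) (hmono : Monotone W)
    (hsupW : (⨆ l, W l) = ⊤) : ∃ l1 : ℤ, ∀ j, l1 ≤ j → W j = ⊤ := by
  have hne : (Set.range fun l => finrank k (W l)).Nonempty := ⟨_, ⟨0, rfl⟩⟩
  have hbdd : BddAbove (Set.range fun l => finrank k (W l)) := by
    refine ⟨finrank k V, ?_⟩
    rintro n ⟨j, rfl⟩
    exact Submodule.finrank_le _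
  obtain ⟨l1, hl1⟩ := Nat.sSup_mem hne hbdd
  have hmax : ∀ j : ℤ, finrank k (W j) ≤ finrank k (W l1) := fun j =>
    le_of_le_of_eq (le_csSup hbdd ⟨j, rfl⟩) hl1.symm
  have heq : ∀ j, l1 ≤ j → W j = W l1 :=
    fun j hj => (Submodule.eq_of_le_of_finrank_le (hmono hj) (hmax j)).symm
  have htop : W l1 = ⊤ := by
    rw [← hsupW]
    refine le_antisymm (le_iSup _ l1) (iSup_le fun j => ?_)
    rcases le_total j l1 with h | h
    · exact hmono h
    · exact (heq j h).le
  exact ⟨l1, fun j hj => (heq j hj).trans htop⟩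

lemma aux_orth (S : V →ₗ[k] V →ₗ[k] k) (N : Module.End k V)
    (hinf : ∀ x y : V, S (N x) y + S x (N y) = 0)
    (W : ℤ → Submodule k V)
    (hNW : ∀ l : ℤ, Submodule.map N (W l) ≤ W (l - 2))
    (hsup5 : ∀ l : ℕ, Submodule.map (N ^ l) (W (l : ℤ)) ⊔ W (-(l : ℤ) - 1) = W (-(l : ℤ)))
    (l0 : ℤ) (hbot : ∀ j ≤ l0, W j = ⊥) :
    ∀ a b : ℤ, a + b ≤ -1 → ∀ x ∈ W a, ∀ y ∈ W b, S x y = 0 := by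
  have hbase : ∀ a b : ℤ, (a ≤ l0 ∨ b ≤ l0) → ∀ x ∈ W a, ∀ y ∈ W b, S x y = 0 := by
    intro a b h x hx y hy
    rcases h with h | h
    · rw [hbot a h] at hx
      obtain rfl := (Submodule.mem_bot k).mp hx
      simp
    · rw [hbot b h] at hy
      obtain rfl := (Submodule.mem_bot k).mp hy
      simp
  have key : ∀ n : ℕ, ∀ a b : ℤ, (a ≤ l0 + n ∨ b ≤ l0 + n) → a + b ≤ -1 →
      ∀ x ∈ W a, ∀ y ∈ W b, S x y = 0 := by
    intro n
    induction n with
    | zero => intro a b h _; exact hbase a b (by omega)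
    | succ n ih =>
      intro a b h hsum x hx y hy
      rcases le_total a b with hab | hba
      · have ha1 : a ≤ -1 := by omega
        set m : ℕ := (-a).toNat with hmdef
        have hma : (m : ℤ) = -a := Int.toNat_of_nonneg (by omega)
        have h5 := hsup5 m
        rw [hma] at h5
        have e1 : -(-a) - 1 = a - 1 := by ring
        have e2 : -(-a) = a := by ring
        rw [e1, e2] at h5
        rw [← h5] at hx
        rcases Submodule.mem_sup.mp hx with ⟨x1, hx1, x2, hx2, hxe⟩
        rcases Submodule.mem_map.mp hx1 with ⟨z, hz, rfl⟩
        have hterm2 : S x2 y = 0 := ih (a - 1) b (Or.inl (by omega)) (by omega) x2 hx2 y hy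
        have hNy : (N ^ m) y ∈ W (b - 2 * m) := aux_mapPow N W hNW m b y hy
        have hterm1 : S z ((N ^ m) y) = 0 :=
          ih (-a) (b - 2 * (m : ℤ)) (Or.inr (by omega)) (by omega) z hz _ hNy
        have hp := aux_powS S N hinf m z y
        calc S x y = S ((N ^ m) z + x2) y := by rw [hxe]
          _ = S ((N ^ m) z) y + S x2 y := by rw [map_add, LinearMap.add_apply]
          _ = 0 := by rw [hp, hterm1, hterm2]; ring
      · have hb1 : b ≤ -1 := by omega
        set m : ℕ := (-b).toNat with hmdef
        have hma : (m : ℤ) = -b := Int.toNat_of_nonneg (by omega)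
        have h5 := hsup5 m
        rw [hma] at h5
        have e1 : -(-b) - 1 = b - 1 := by ring
        have e2 : -(-b) = b := by ring
        rw [e1, e2] at h5
        rw [← h5] at hy
        rcases Submodule.mem_sup.mp hy with ⟨y1, hy1, y2, hy2, hye⟩
        rcases Submodule.mem_map.mp hy1 with ⟨z, hz, rfl⟩
        have hterm2 : S x y2 = 0 := ih a (b - 1) (Or.inr (by omega)) (by omega) x hx y2 hy2
        have hNx : (N ^ m) x ∈ W (a - 2 * m) := aux_mapPow N W hNW m a x hx
        have hterm1 : S ((N ^ m) x) z = 0 :=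
          ih (a - 2 * (m : ℤ)) (-b) (Or.inl (by omega)) (by omega) _ hNx z hz
        have h9 : S x ((N ^ m) z) = 0 := by
          have hp := aux_powS S N hinf m x z
          rw [hterm1] at hp
          have hne : ((-1 : k) ^ m) ≠ 0 := pow_ne_zero _ (by norm_num)
          exact (mul_eq_zero.mp hp.symm).resolve_left hne
        calc S x y = S x ((N ^ m) z + y2) := by rw [hye]
          _ = S x ((N ^ m) z) + S x y2 := by rw [map_add]
          _ = 0 := by rw [h9, hterm2]; ring
  intro a b hsum x hx y hy
  exact key (a - l0).toNat a b (Or.inl (by omega)) hsum x hx y hy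

lemma aux_rank [FiniteDimensional k V] (N : Module.End k V) (W : ℤ → Submodule k V)
    (hmono : Monotone W)
    (hiso : ∀ l : ℕ, Submodule.map (N ^ l) (W (l : ℤ)) ⊔ W (-(l : ℤ) - 1) = W (-(l : ℤ)) ∧
      W (l : ℤ) ⊓ Submodule.comap (N ^ l) (W (-(l : ℤ) - 1)) = W ((l : ℤ) - 1)) :
    ∀ j : ℕ, finrank k (W (j : ℤ)) + finrank k (W (-(j : ℤ) - 1)) =
      finrank k (W (-(j : ℤ))) + finrank k (W ((j : ℤ) - 1)) := by
  intro j
  set Q := W (-(j : ℤ) - 1) with hQ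
  let f₁ : W (j : ℤ) →ₗ[k] V ⧸ Q := Q.mkQ ∘ₗ (N ^ j : Module.End k V) ∘ₗ (W (j : ℤ)).subtype
  let f₂ : W (-(j : ℤ)) →ₗ[k] V ⧸ Q := Q.mkQ ∘ₗ (W (-(j : ℤ))).subtype
  have hker₁ : LinearMap.ker f₁ = Submodule.comap (W (j : ℤ)).subtype (W ((j : ℤ) - 1)) := by
    ext x
    simp only [f₁, LinearMap.mem_ker, LinearMap.comp_apply, Submodule.mem_comap,
      Submodule.mkQ_apply, Submodule.Quotient.mk_eq_zero, Submodule.subtype_apply]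
    constructor
    · intro h
      rw [← (hiso j).2]
      exact ⟨x.2, h⟩
    · intro h
      rw [← (hiso j).2] at h
      exact h.2
  have hker₂ : LinearMap.ker f₂ = Submodule.comap (W (-(j : ℤ))).subtype Q := by
    ext x
    simp only [f₂, LinearMap.mem_ker, LinearMap.comp_apply, Submodule.mem_comap,
      Submodule.mkQ_apply, Submodule.Quotient.mk_eq_zero, Submodule.subtype_apply]
  have hQbot : Submodule.map Q.mkQ Q = ⊥ := by
    rw [eq_bot_iff, Submodule.map_le_iff_le_comap]
    intro x hx
    simpa [Submodule.mem_comap, Submodule.Quotient.mk_eq_zero] using hx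
  have hrange₁ : LinearMap.range f₁ = Submodule.map Q.mkQ (W (-(j : ℤ))) := by
    rw [show f₁ = Q.mkQ ∘ₗ ((N ^ j : Module.End k V) ∘ₗ (W (j : ℤ)).subtype) from rfl]
    rw [LinearMap.range_comp, LinearMap.range_comp, Submodule.range_subtype]
    conv_rhs => rw [← (hiso j).1]
    rw [Submodule.map_sup, ← hQ, hQbot, sup_bot_eq]
  have hrange₂ : LinearMap.range f₂ = Submodule.map Q.mkQ (W (-(j : ℤ))) := by
    rw [show f₂ = Q.mkQ ∘ₗ (W (-(j : ℤ))).subtype from rfl]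
    rw [LinearMap.range_comp, Submodule.range_subtype]
  have r1 := LinearMap.finrank_range_add_finrank_ker f₁
  have r2 := LinearMap.finrank_range_add_finrank_ker f₂
  have e1 : finrank k (LinearMap.ker f₁) = finrank k (W ((j : ℤ) - 1)) := by
    rw [hker₁]
    exact (Submodule.comapSubtypeEquivOfLe (hmono (by omega))).finrank_eq
  have e2 : finrank k (LinearMap.ker f₂) = finrank k Q := by
    rw [hker₂]
    exact (Submodule.comapSubtypeEquivOfLe (hmono (by omega))).finrank_eq
  have e3 : finrank k (LinearMap.range f₁) = finrank k (LinearMap.range f₂) := by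
    rw [hrange₁, hrange₂]
  omega

lemma aux_const [FiniteDimensional k V] (W : ℤ → Submodule k V)
    (hrank : ∀ j : ℕ, finrank k (W (j : ℤ)) + finrank k (W (-(j : ℤ) - 1)) =
      finrank k (W (-(j : ℤ))) + finrank k (W ((j : ℤ) - 1)))
    (l0 : ℤ) (hbot : ∀ j ≤ l0, W j = ⊥) (l1 : ℤ) (htop : ∀ j, l1 ≤ j → W j = ⊤) :
    ∀ a : ℤ, finrank k (W a) + finrank k (W (-a - 1)) = finrank k V := by
  have hstep : ∀ a : ℤ, finrank k (W a) + finrank k (W (-a - 1)) =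
      finrank k (W (a - 1)) + finrank k (W (-a)) := by
    intro a
    rcases Int.natAbs_eq a with h | h
    · have hr := hrank a.natAbs
      rw [← h] at hr
      omega
    · have hn : (a.natAbs : ℤ) = -a := by omega
      have hr := hrank a.natAbs
      rw [hn, show -(-a) - 1 = a - 1 by ring, show -(-a) = a by ring] at hr
      omega
  set a0 := min l0 (-l1 - 1) with ha0
  have hbase : ∀ a : ℤ, a ≤ a0 → finrank k (W a) + finrank k (W (-a - 1)) = finrank k V := by
    intro a ha
    rw [hbot a (by omega), htop (-a - 1) (by omega)]
    simp
  have hup : ∀ n : ℕ, finrank k (W (a0 + n)) + finrank k (W (-(a0 + n) - 1)) = finrank k V := by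
    intro n
    induction n with
    | zero =>
      have e0 : a0 + ((0 : ℕ) : ℤ) = a0 := by push_cast; ring
      rw [e0]
      exact hbase a0 le_rfl
    | succ n ihn =>
      have hs := hstep (a0 + ((n + 1 : ℕ) : ℤ))
      push_cast at hs ⊢
      have e1 : a0 + ((n : ℤ) + 1) - 1 = a0 + (n : ℤ) := by ring
      have e2 : -(a0 + ((n : ℤ) + 1)) = -(a0 + (n : ℤ)) - 1 := by ring
      clear hs
      have hs := hstep (a0 + ((n : ℤ) + 1))
      rw [e1, e2] at hs
      show finrank k (W (a0 + ((n : ℤ) + 1))) + finrank k (W (-(a0 + ((n : ℤ) + 1)) - 1)) = finrank k V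
      rw [e2]
      omega
  intro a
  rcases le_or_gt a a0 with h | h
  · exact hbase a h
  · have e : a0 + ((a - a0).toNat : ℤ) = a := by omega
    have := hup (a - a0).toNat
    rw [e] at this
    exact this

lemma aux_dual [FiniteDimensional k V] (S : V →ₗ[k] V →ₗ[k] k)
    (hSnd : ∀ x : V, (∀ y : V, S x y = 0) → x = 0)
    (W : ℤ → Submodule k V)
    (horth : ∀ a b : ℤ, a + b ≤ -1 → ∀ x ∈ W a, ∀ y ∈ W b, S x y = 0)
    (hconst : ∀ a : ℤ, finrank k (W a) + finrank k (W (-a - 1)) = finrank k V) :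
    ∀ b : ℤ, ∀ u : V, (∀ y ∈ W b, S u y = 0) → u ∈ W (-b - 1) := by
  intro b u hu
  have hSinj : Function.Injective (S : V →ₗ[k] Module.Dual k V) := by
    intro x y hxy
    have hz : x - y = 0 := by
      refine hSnd (x - y) fun z => ?_
      have hxyz : S x z = S y z := by rw [hxy]
      rw [map_sub, LinearMap.sub_apply, hxyz, sub_self]
    exact sub_eq_zero.mp hz
  let e := LinearMap.linearEquivOfInjective (S : V →ₗ[k] Module.Dual k V) hSinj
    (Subspace.dual_finrank_eq).symm
  have heS : (e : V →ₗ[k] Module.Dual k V) = S := rfl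
  set A := (W b).dualAnnihilator with hA
  set P := Submodule.comap (e : V →ₗ[k] Module.Dual k V) A with hP
  have hfrP : finrank k P = finrank k A := by
    rw [hP, Submodule.comap_equiv_eq_map_symm]
    exact LinearEquiv.finrank_map_eq _ _
  have hfrA : finrank k A + finrank k (W b) = finrank k V := by
    have h1 := Submodule.finrank_quotient_add_finrank (W b)
    have h2 : finrank k (V ⧸ W b) = finrank k A :=
      (Subspace.quotEquivAnnihilator (W b)).finrank_eq
    omega
  have hle : W (-b - 1) ≤ P := by
    intro x hx
    rw [hP, Submodule.mem_comap, heS, hA, Submodule.mem_dualAnnihilator]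
    intro w hw
    exact horth (-b - 1) b (by omega) x hx w hw
  have hconstb := hconst (-b - 1)
  rw [show -(-b - 1) - 1 = b by ring] at hconstb
  have hPW : W (-b - 1) = P := Submodule.eq_of_le_of_finrank_le hle (by omega)
  rw [hPW, hP, Submodule.mem_comap, heS, hA, Submodule.mem_dualAnnihilator]
  exact hu

end WeightAux

/-- Let `S` be a nondegenerate bilinear form, `N` a nilpotent infinitesimal isometry of `S`,
and `W` the weight filtration of `N`. Then for each `l ≥ 0` the form
`S_l(u,v) = S(u, N^l v)` descends to `Gr_l^W V` (it vanishes as soon as one argument lies in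
`W_{l-1}`), and its restriction to the primitive part
`P_l = ker (N^{l+1} : Gr_l^W → Gr_{-l-2}^W)` is nondegenerate: if `u ∈ W_l` represents a
primitive class pairing to zero with all primitive classes, then `u ∈ W_{l-1}`. -/
theorem primitive_pairing_nondegenerate
    (k : Type*) [Field k] [CharZero k]
    (V : Type*) [AddCommGroup V] [Module k V] [FiniteDimensional k V]
    (S : V →ₗ[k] V →ₗ[k] k)
    (hSnd : ∀ x : V, (∀ y : V, S x y = 0) → x = 0)
    (N : Module.End k V) (hN : IsNilpotent N)
    (hinf : ∀ x y : V, S (N x) y + S x (N y) = 0)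
    (W : ℤ → Submodule k V) (hW : IsWeightFiltration N W) :
    ∀ l : ℕ,
      (∀ u v : V, u ∈ W ((l : ℤ) - 1) → v ∈ W (l : ℤ) → S u ((N ^ l) v) = 0) ∧
      (∀ u v : V, u ∈ W (l : ℤ) → v ∈ W ((l : ℤ) - 1) → S u ((N ^ l) v) = 0) ∧
      (∀ u : V, u ∈ W (l : ℤ) ⊓ Submodule.comap (N ^ (l + 1)) (W (-(l : ℤ) - 3)) →
        (∀ v : V, v ∈ W (l : ℤ) ⊓ Submodule.comap (N ^ (l + 1)) (W (-(l : ℤ) - 3)) →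
          S u ((N ^ l) v) = 0) →
        u ∈ W ((l : ℤ) - 1)) := by
  obtain ⟨hmono, hsupW, hinfW, hNW, hiso⟩ := hW
  obtain ⟨l0, hbot⟩ := aux_bot W hmono hinfW
  obtain ⟨l1, htop⟩ := aux_top W hmono hsupW
  have horth := aux_orth S N hinf W hNW (fun l => (hiso l).1) l0 hbot
  have hconst := aux_const W (aux_rank N W hmono hiso) l0 hbot l1 htop
  have hdual := aux_dual S hSnd W horth hconst
  intro l
  refine ⟨?_, ?_, ?_⟩
  · intro u v hu hv
    have h1 := aux_mapPow N W hNW l (l : ℤ) v hv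
    rw [show (l : ℤ) - 2 * (l : ℕ) = -(l : ℤ) by push_cast; ring] at h1
    exact horth ((l : ℤ) - 1) (-(l : ℤ)) (by omega) u hu _ h1
  · intro u v hu hv
    have h1 := aux_mapPow N W hNW l ((l : ℤ) - 1) v hv
    rw [show (l : ℤ) - 1 - 2 * (l : ℕ) = -(l : ℤ) - 1 by push_cast; ring] at h1
    exact horth (l : ℤ) (-(l : ℤ) - 1) (by omega) u hu _ h1
  · intro u hu hpair
    obtain ⟨hu1, hu2⟩ := Submodule.mem_inf.mp hu
    rw [Submodule.mem_comap] at hu2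
    have hvdec : ∀ v ∈ W (l : ℤ), S u ((N ^ l) v) = 0 := by
      intro v hv
      have h1 := aux_mapPow N W hNW (l + 1) (l : ℤ) v hv
      rw [show (l : ℤ) - 2 * ((l + 1 : ℕ) : ℤ) = -((l + 2 : ℕ) : ℤ) by push_cast; ring] at h1
      have h5 := (hiso (l + 2)).1
      rw [← h5] at h1
      rcases Submodule.mem_sup.mp h1 with ⟨c, hc, r, hr, hcr⟩
      rcases Submodule.mem_map.mp hc with ⟨w, hw, rfl⟩
      have hNw : N w ∈ W (l : ℤ) := by
        have h6 := hNW ((l + 2 : ℕ) : ℤ) (Submodule.mem_map_of_mem hw)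
        rw [show ((l + 2 : ℕ) : ℤ) - 2 = (l : ℤ) by push_cast; ring] at h6
        exact h6
      set p := v - N w with hpdef
      have hp1 : p ∈ W (l : ℤ) := sub_mem hv hNw
      have hp2 : (N ^ (l + 1)) p ∈ W (-(l : ℤ) - 3) := by
        have hNe : (N ^ (l + 2)) w = (N ^ (l + 1)) (N w) := by
          rw [pow_succ, Module.End.mul_apply]
        have hpr : (N ^ (l + 1)) p = r := by
          rw [hpdef, map_sub, ← hNe, ← hcr]
          abel
        rw [hpr]
        rw [show -((l + 2 : ℕ) : ℤ) - 1 = -(l : ℤ) - 3 by push_cast; ring] at hr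
        exact hr
      have ht1 : S u ((N ^ l) p) = 0 :=
        hpair p (Submodule.mem_inf.mpr ⟨hp1, Submodule.mem_comap.mpr hp2⟩)
      have ht2 : S u ((N ^ l) (N w)) = 0 := by
        have hNe : (N ^ l) (N w) = (N ^ (l + 1)) w := by
          rw [pow_succ, Module.End.mul_apply]
        rw [hNe]
        have hw' : w ∈ W ((l : ℤ) + 2) := by
          rw [show ((l : ℤ) + 2) = ((l + 2 : ℕ) : ℤ) by push_cast; ring]
          exact hw
        have h0 : S ((N ^ (l + 1)) u) w = 0 :=
          horth (-(l : ℤ) - 3) ((l : ℤ) + 2) (by omega) _ hu2 w hw'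
        have hp := aux_powS S N hinf (l + 1) u w
        rw [h0] at hp
        have hne : ((-1 : k) ^ (l + 1)) ≠ 0 := pow_ne_zero _ (by norm_num)
        exact (mul_eq_zero.mp hp.symm).resolve_left hne
      have hv' : (N ^ l) v = (N ^ l) p + (N ^ l) (N w) := by
        rw [hpdef, map_sub]
        abel
      rw [hv', map_add, ht1, ht2, add_zero]
    have hWneg : ∀ y ∈ W (-(l : ℤ)), S u y = 0 := by
      intro y hy
      have h5 := (hiso l).1
      rw [← h5] at hy
      rcases Submodule.mem_sup.mp hy with ⟨c, hc, r, hr, hcr⟩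
      rcases Submodule.mem_map.mp hc with ⟨v, hv, rfl⟩
      have t1 := hvdec v hv
      have t2 : S u r = 0 := horth (l : ℤ) (-(l : ℤ) - 1) (by omega) u hu1 r hr
      rw [← hcr, map_add, t1, t2, add_zero]
    have hfin := hdual (-(l : ℤ)) u hWneg
    rw [show -(-(l : ℤ)) - 1 = (l : ℤ) - 1 by ring] at hfin
    exact hfin
end

section
/- Let V be a finite-dimensional complex vector space with a bigrading V = ⊕_{p,q} I^{p,q}, and let N : V → V be a linear map of type (-1,-1), i.e. N(I^{p,q}) ⊆ I^{p-1,q-1}. Define the semisimple operator Y by Y·v = (p+q-k)·v for v ∈ I^{p,q} (k a fixed integer). If for each j, N^j : ⊕_{p+q=k+j} I^{p,q} → ⊕_{p+q=k-j} I^{p,q} is an isomorphism, then there exists a linear map N⁺ : V → V of type (1,1) such that {N⁺, Y, N} is an sl₂-triple: [Y, N] = -2N, [Y, N⁺] = 2N⁺, [N⁺, N] = Y. -/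
open Submodule

namespace Sl2Aux

variable {V : Type*} [AddCommGroup V] [Module ℂ V] [FiniteDimensional ℂ V]
variable (I : ℤ × ℤ → Submodule ℂ V) (hI : DirectSum.IsInternal I)

/-- Projection onto the `pq` component. -/
noncomputable def pr (pq : ℤ × ℤ) : V →ₗ[ℂ] V :=
  (I pq).subtype ∘ₗ
    ((DirectSum.component ℂ (ℤ × ℤ) (fun pq => I pq) pq) ∘ₗ
      (LinearEquiv.ofBijective (DirectSum.coeLinearMap I) hI).symm.toLinearMap)

lemma pr_mem (pq : ℤ × ℤ) (v : V) : pr I hI pq v ∈ I pq := by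
  simp only [pr, LinearMap.comp_apply]
  exact ((DirectSum.component ℂ (ℤ × ℤ) (fun pq => I pq) pq) _).2

lemma pr_of_mem {pq : ℤ × ℤ} {v : V} (h : v ∈ I pq) : pr I hI pq v = v := by
  simp only [pr, LinearMap.comp_apply, LinearEquiv.coe_coe]
  have := hI.ofBijective_coeLinearMap_of_mem h
  erw [this]
  rfl

lemma pr_of_mem_ne {pq pq' : ℤ × ℤ} (hne : pq ≠ pq') {v : V} (h : v ∈ I pq) :
    pr I hI pq' v = 0 := by
  simp only [pr, LinearMap.comp_apply, LinearEquiv.coe_coe]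
  have := hI.ofBijective_coeLinearMap_of_mem_ne hne h
  erw [this]
  simp

include hI in
/-- Two endomorphisms agreeing on every graded piece are equal. -/
lemma ext_on {f g : Module.End ℂ V} (h : ∀ pq : ℤ × ℤ, ∀ v ∈ I pq, f v = g v) : f = g := by
  ext v
  have hv : v ∈ (⊤ : Submodule ℂ V) := mem_top
  rw [← hI.submodule_iSup_eq_top] at hv
  refine Submodule.iSup_induction I (motive := fun x => f x = g x) hv (fun i x hx => h i x hx)
    (by simp) ?_
  intro x y hx hy
  simp [map_add, hx, hy]

/-- The finite set of nontrivial graded pieces. -/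
noncomputable def S : Finset (ℤ × ℤ) :=
  (WellFoundedGT.finite_ne_bot_of_iSupIndep hI.submodule_iSupIndep).toFinset

lemma mem_S {pq : ℤ × ℤ} : pq ∈ S I hI ↔ I pq ≠ ⊥ := by
  simp [S]

include hI in
lemma sum_pr : ∑ pq ∈ S I hI, pr I hI pq = LinearMap.id := by
  apply ext_on I hI ?_
  intro pq v hv
  by_cases hbot : I pq = ⊥
  · have hv0 : v = 0 := by simpa [hbot] using hv
    simp [hv0]
  · have hmem : pq ∈ S I hI := (mem_S I hI).2 hbot
    rw [LinearMap.sum_apply]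
    rw [Finset.sum_eq_single pq]
    · simp [pr_of_mem I hI hv]
    · intro b _ hb
      exact pr_of_mem_ne I hI (Ne.symm hb) hv
    · intro h; exact absurd hmem h

include hI in
/-- Commutation of projections with a map of pure bidegree `(-a, -a)`. -/
lemma pr_comp_of_bidegree (F : Module.End ℂ V) (a : ℤ)
    (hF : ∀ p q : ℤ, ∀ v ∈ I (p, q), F v ∈ I (p - a, q - a)) (p q : ℤ) :
    (pr I hI (p - a, q - a)) ∘ₗ F = F ∘ₗ pr I hI (p, q) := by
  apply ext_on I hI ?_
  intro rs v hv
  obtain ⟨r, s⟩ := rs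
  simp only [LinearMap.comp_apply]
  by_cases hrs : ((r : ℤ), (s : ℤ)) = ((p : ℤ), (q : ℤ))
  · rw [hrs] at hv
    rw [pr_of_mem I hI hv, pr_of_mem I hI (hF p q v hv)]
  · rw [pr_of_mem_ne I hI hrs hv, map_zero]
    have hFv : F v ∈ I (r - a, s - a) := hF r s v hv
    have hne : ((r : ℤ) - a, (s : ℤ) - a) ≠ ((p : ℤ) - a, (q : ℤ) - a) := by
      intro hcon
      apply hrs
      have h1 := congrArg Prod.fst hcon
      have h2 := congrArg Prod.snd hcon
      simp only at h1 h2
      have hr : r = p := by omega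
      have hs : s = q := by omega
      rw [hr, hs]
    exact pr_of_mem_ne I hI hne hFv

end Sl2Aux

section TraceForm

variable {W : Type*} [AddCommGroup W] [Module ℂ W] [FiniteDimensional ℂ W]

lemma trace_form_nondegen (f : Module.End ℂ W)
    (h : ∀ g : Module.End ℂ W, LinearMap.trace ℂ W (f * g) = 0) : f = 0 := by
  by_contra hf
  obtain ⟨v, hv⟩ : ∃ v, f v ≠ 0 := by
    by_contra hcon
    push_neg at hcon
    exact hf (LinearMap.ext fun v => by simp [hcon v])
  obtain ⟨φ, hφ⟩ : ∃ φ : Module.Dual ℂ W, φ (f v) ≠ 0 := by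
    by_contra hcon
    push_neg at hcon
    exact hv ((Module.forall_dual_apply_eq_zero_iff ℂ (f v)).1 hcon)
  set g : Module.End ℂ W := dualTensorHom ℂ W W (φ ⊗ₜ v) with hg
  have hfg : f * g = dualTensorHom ℂ W W (φ ⊗ₜ (f v)) := by
    ext w
    simp [hg, dualTensorHom_apply, Module.End.mul_apply]
  have := h g
  rw [hfg] at this
  rw [LinearMap.trace_eq_contract_apply] at this
  simp [contractLeft_apply] at this
  exact hφ this

/-- The trace pairing as a map to the dual, and its surjectivity. -/
noncomputable def tracePairing : Module.End ℂ W →ₗ[ℂ] Module.Dual ℂ (Module.End ℂ W) where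
  toFun Z :=
    { toFun := fun X => LinearMap.trace ℂ W (X * Z)
      map_add' := fun X X' => by simp [add_mul]
      map_smul' := fun c X => by simp [smul_mul_assoc] }
  map_add' Z Z' := by ext X; simp [mul_add]
  map_smul' c Z := by ext X; simp [mul_smul_comm]

lemma tracePairing_surjective :
    Function.Surjective (tracePairing (W := W)) := by
  have hinj : Function.Injective (tracePairing (W := W)) := by
    rw [← LinearMap.ker_eq_bot]
    rw [LinearMap.ker_eq_bot']
    intro Z hZ
    apply trace_form_nondegen
    intro g
    have := DFunLike.congr_fun hZ g
    simp only [tracePairing, LinearMap.coe_mk, AddHom.coe_mk, LinearMap.zero_apply] at this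
    rw [LinearMap.trace_mul_comm]
    exact this
  have hfr : Module.finrank ℂ (Module.End ℂ W) =
      Module.finrank ℂ (Module.Dual ℂ (Module.End ℂ W)) :=
    (Subspace.dual_finrank_eq).symm
  exact (LinearMap.injective_iff_surjective_of_finrank_eq_finrank hfr).1 hinj

end TraceForm

open Sl2Aux



lemma trace_eq_of_equiv_comm {M₁ M₂ : Type*} [AddCommGroup M₁] [Module ℂ M₁]
    [AddCommGroup M₂] [Module ℂ M₂] [Module.Finite ℂ M₁] [Module.Free ℂ M₁]
    [Module.Finite ℂ M₂] [Module.Free ℂ M₂]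
    (e : M₁ ≃ₗ[ℂ] M₂) (f : Module.End ℂ M₁) (g : Module.End ℂ M₂)
    (h : ∀ x, e (f x) = g (e x)) :
    LinearMap.trace ℂ M₁ f = LinearMap.trace ℂ M₂ g := by
  have hconj : e.conj f = g := by
    ext y
    rw [LinearEquiv.conj_apply]
    simp only [LinearMap.comp_apply, LinearEquiv.coe_coe]
    rw [h (e.symm y), e.apply_symm_apply]
  rw [← hconj, LinearMap.trace_conj']

open Sl2Aux in
/-- Key lemma: if `Z` commutes with `N`, then `trace (Y * Z) = 0`. -/
lemma key_trace {V : Type*} [AddCommGroup V] [Module ℂ V] [FiniteDimensional ℂ V]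
    (I : ℤ × ℤ → Submodule ℂ V) (hI : DirectSum.IsInternal I) (k : ℤ)
    (N Y : Module.End ℂ V)
    (hNpow : ∀ (m : ℕ) (p q : ℤ), ∀ v ∈ I (p, q), (N ^ m) v ∈ I (p - m, q - m))
    (hY : ∀ p q : ℤ, ∀ v ∈ I (p, q), Y v = ((p + q - k : ℤ) : ℂ) • v)
    (hiso : ∀ j : ℕ,
      Submodule.map (N ^ j) (⨆ p : ℤ, ⨆ q : ℤ, ⨆ _ : p + q = k + j, I (p, q)) =
        (⨆ p : ℤ, ⨆ q : ℤ, ⨆ _ : p + q = k - j, I (p, q)) ∧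
      (∀ x ∈ (⨆ p : ℤ, ⨆ q : ℤ, ⨆ _ : p + q = k + j, I (p, q)), (N ^ j) x = 0 → x = 0))
    (Z : Module.End ℂ V) (hZ : N * Z = Z * N) :
    LinearMap.trace ℂ V (Y * Z) = 0 := by
  classical
  set w : ℤ × ℤ → ℤ := fun pq => pq.1 + pq.2 - k with hw
  set t : ℤ × ℤ → ℂ := fun pq => LinearMap.trace ℂ V (Z * pr I hI pq) with ht
  set A : ℤ → ℂ := fun c => ∑ pq ∈ (S I hI).filter (fun pq => w pq = c), t pq with hA
  -- generic computation of the fiber projections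
  have hPi_apply : ∀ (c : ℤ) (ab : ℤ × ℤ) (u : V), u ∈ I ab →
      (∑ pq ∈ (S I hI).filter (fun pq => w pq = c), pr I hI pq) u
        = if w ab = c then u else 0 := by
    intro c ab u hu
    by_cases hbot : I ab = ⊥
    · have hu0 : u = 0 := by simpa [hbot] using hu
      rw [hu0, map_zero]
      simp
    · have hab : ab ∈ S I hI := (mem_S I hI).2 hbot
      rw [LinearMap.sum_apply]
      by_cases hc : w ab = c
      · rw [if_pos hc, Finset.sum_eq_single ab]
        · exact pr_of_mem I hI hu
        · intro b _ hne
          exact pr_of_mem_ne I hI (Ne.symm hne) hu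
        · intro hnot; exact absurd (Finset.mem_filter.2 ⟨hab, hc⟩) hnot
      · rw [if_neg hc]
        apply Finset.sum_eq_zero
        intro b hb
        have hne : ab ≠ b := by
          rintro rfl; exact hc (Finset.mem_filter.1 hb).2
        exact pr_of_mem_ne I hI hne hu
  -- the crucial symmetry of fiber traces
  have hAj : ∀ j : ℕ, A ((j : ℤ)) = A (-(j : ℤ)) := by
    intro j
    set Wp := (⨆ p : ℤ, ⨆ q : ℤ, ⨆ _ : p + q = k + j, I (p, q)) with hWp
    set Wm := (⨆ p : ℤ, ⨆ q : ℤ, ⨆ _ : p + q = k - j, I (p, q)) with hWm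
    have hIWp : ∀ p q : ℤ, p + q = k + j → I (p, q) ≤ Wp := fun p q h =>
      le_iSup_of_le p (le_iSup_of_le q (le_iSup_of_le h le_rfl))
    have hIWm : ∀ p q : ℤ, p + q = k - j → I (p, q) ≤ Wm := fun p q h =>
      le_iSup_of_le p (le_iSup_of_le q (le_iSup_of_le h le_rfl))
    set Pip : Module.End ℂ V :=
      ∑ pq ∈ (S I hI).filter (fun pq => w pq = (j : ℤ)), pr I hI pq with hPip
    set Pim : Module.End ℂ V :=
      ∑ pq ∈ (S I hI).filter (fun pq => w pq = -(j : ℤ)), pr I hI pq with hPim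
    have hPip_mem : ∀ u : V, Pip u ∈ Wp := by
      intro u
      rw [hPip, LinearMap.sum_apply]
      apply Submodule.sum_mem
      intro pq hpq
      have h1 : w pq = (j : ℤ) := (Finset.mem_filter.1 hpq).2
      have h2 : pq.1 + pq.2 = k + j := by simp only [hw] at h1; omega
      exact hIWp pq.1 pq.2 h2 (pr_mem I hI pq u)
    have hPim_mem : ∀ u : V, Pim u ∈ Wm := by
      intro u
      rw [hPim, LinearMap.sum_apply]
      apply Submodule.sum_mem
      intro pq hpq
      have h1 : w pq = -(j : ℤ) := (Finset.mem_filter.1 hpq).2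
      have h2 : pq.1 + pq.2 = k - j := by simp only [hw] at h1; omega
      exact hIWm pq.1 pq.2 h2 (pr_mem I hI pq u)
    -- N^j restricts to an isomorphism Wp ≃ Wm
    have hmapNj : Submodule.map (N ^ j) Wp = Wm := (hiso j).1
    have hWpNj : ∀ x ∈ Wp, (N ^ j) x ∈ Wm := fun x hx =>
      hmapNj ▸ Submodule.mem_map_of_mem hx
    set f0 : Wp →ₗ[ℂ] Wm := (N ^ j).restrict hWpNj with hf0
    have hbij : Function.Bijective f0 := by
      constructor
      · intro x y hxy
        have h1 : (N ^ j) (x : V) = (N ^ j) (y : V) := by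
          have := congrArg Subtype.val hxy
          simpa [hf0, LinearMap.restrict_coe_apply] using this
        have h2 : ((x : V) - y) ∈ Wp := sub_mem x.2 y.2
        have h3 : (N ^ j) ((x : V) - y) = 0 := by rw [map_sub, h1, sub_self]
        have h4 := (hiso j).2 _ h2 h3
        exact Subtype.ext (sub_eq_zero.1 h4)
      · intro y
        have hy : (y : V) ∈ Submodule.map (N ^ j) Wp := hmapNj.symm ▸ y.2
        obtain ⟨x, hx, hxy⟩ := hy
        exact ⟨⟨x, hx⟩, Subtype.ext (by simpa [hf0, LinearMap.restrict_coe_apply] using hxy)⟩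
    set e := LinearEquiv.ofBijective f0 hbij with he
    set rp : V →ₗ[ℂ] Wp := LinearMap.codRestrict Wp Pip hPip_mem with hrp
    set rm : V →ₗ[ℂ] Wm := LinearMap.codRestrict Wm Pim hPim_mem with hrm
    set Bp : Module.End ℂ Wp := rp ∘ₗ (Z ∘ₗ Wp.subtype) with hBp
    set Bm : Module.End ℂ Wm := rm ∘ₗ (Z ∘ₗ Wm.subtype) with hBm
    have htr_p : A ((j : ℤ)) = LinearMap.trace ℂ Wp Bp := by
      have h1 : (Z * Pip : Module.End ℂ V) = (Z ∘ₗ Wp.subtype) ∘ₗ rp := by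
        ext u
        simp [hrp, LinearMap.codRestrict_apply, Module.End.mul_apply]
      have h0 : A ((j : ℤ)) = LinearMap.trace ℂ V (Z * Pip) := by
        rw [hA, hPip, Finset.mul_sum, map_sum]
      rw [h0, h1, LinearMap.trace_comp_comm' rp (Z ∘ₗ Wp.subtype), hBp]
    have htr_m : A (-(j : ℤ)) = LinearMap.trace ℂ Wm Bm := by
      have h1 : (Z * Pim : Module.End ℂ V) = (Z ∘ₗ Wm.subtype) ∘ₗ rm := by
        ext u
        simp [hrm, LinearMap.codRestrict_apply, Module.End.mul_apply]
      have h0 : A (-(j : ℤ)) = LinearMap.trace ℂ V (Z * Pim) := by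
        rw [hA, hPim, Finset.mul_sum, map_sum]
      rw [h0, h1, LinearMap.trace_comp_comm' rm (Z ∘ₗ Wm.subtype), hBm]
    -- the commutation lemma
    have hL : Pim ∘ₗ (N ^ j) = (N ^ j) ∘ₗ Pip := by
      apply ext_on I hI ?_
      intro rs v hv
      obtain ⟨r, s⟩ := rs
      simp only [LinearMap.comp_apply]
      have hv' := hNpow j r s v hv
      rw [hPim, hPip, hPi_apply (-(j : ℤ)) (r - j, s - j) _ hv',
        hPi_apply ((j : ℤ)) (r, s) v hv]
      by_cases hc : r + s - k = (j : ℤ)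
      · rw [if_pos (by simp only [hw]; omega), if_pos (by simp only [hw]; omega)]
      · rw [if_neg (by simp only [hw]; omega), if_neg (by simp only [hw]; omega), map_zero]
    have hcommj : (N ^ j) * Z = Z * (N ^ j) := by
      have hc : Commute N Z := hZ
      exact (hc.pow_left j)
    have hconj : ∀ x : Wp, e (Bp x) = Bm (e x) := by
      intro x
      apply Subtype.ext
      have hval1 : ((e (Bp x) : Wm) : V) = (N ^ j) (Pip (Z (x : V))) := by
        simp [he, hf0, hBp, hrp, LinearMap.restrict_coe_apply, LinearMap.codRestrict_apply]
      have hval2 : ((Bm (e x) : Wm) : V) = Pim (Z ((N ^ j) (x : V))) := by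
        simp [he, hf0, hBm, hrm, LinearMap.restrict_coe_apply, LinearMap.codRestrict_apply]
      rw [hval1, hval2]
      have h1 : Z ((N ^ j) (x : V)) = (N ^ j) (Z (x : V)) := by
        have := DFunLike.congr_fun hcommj (x : V)
        simpa [Module.End.mul_apply] using this.symm
      have h2 := DFunLike.congr_fun hL (Z (x : V))
      simp only [LinearMap.comp_apply] at h2
      rw [h1, h2]
    have htrace_eq : LinearMap.trace ℂ Wp Bp = LinearMap.trace ℂ Wm Bm :=
      trace_eq_of_equiv_comm e Bp Bm hconj
    exact htr_p.trans (htrace_eq.trans htr_m.symm)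
  -- express Y as a weighted sum of projections
  have hYpr : ∀ pq : ℤ × ℤ, Y * pr I hI pq = ((w pq : ℤ) : ℂ) • pr I hI pq := by
    intro pq
    ext v
    have hm := pr_mem I hI pq v
    simp only [Module.End.mul_apply, LinearMap.smul_apply]
    exact hY pq.1 pq.2 _ hm
  have hid : (∑ pq ∈ S I hI, pr I hI pq) = (1 : Module.End ℂ V) := by
    rw [sum_pr I hI]; rfl
  have hYsum : Y = ∑ pq ∈ S I hI, ((w pq : ℤ) : ℂ) • pr I hI pq := by
    calc Y = Y * (∑ pq ∈ S I hI, pr I hI pq) := by rw [hid, mul_one]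
    _ = ∑ pq ∈ S I hI, Y * pr I hI pq := Finset.mul_sum _ _ _
    _ = ∑ pq ∈ S I hI, ((w pq : ℤ) : ℂ) • pr I hI pq :=
        Finset.sum_congr rfl (fun pq _ => hYpr pq)
  have hstep1 : LinearMap.trace ℂ V (Y * Z) = ∑ pq ∈ S I hI, ((w pq : ℤ) : ℂ) * t pq := by
    conv_lhs => rw [hYsum]
    rw [Finset.sum_mul, map_sum]
    refine Finset.sum_congr rfl fun pq _ => ?_
    rw [smul_mul_assoc, map_smul, smul_eq_mul, LinearMap.trace_mul_comm]
  -- fiberwise regrouping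
  set C : Finset ℤ := ((S I hI).image w) ∪ ((S I hI).image w).image (fun c => -c) with hC
  have hfib : LinearMap.trace ℂ V (Y * Z) = ∑ c ∈ C, (c : ℂ) * A c := by
    rw [hstep1]
    rw [← Finset.sum_fiberwise_of_maps_to (g := w) (t := C)
      (fun pq hpq => Finset.mem_union_left _ (Finset.mem_image_of_mem w hpq))
      (fun pq => ((w pq : ℤ) : ℂ) * t pq)]
    refine Finset.sum_congr rfl fun c hc => ?_
    rw [hA, Finset.mul_sum]
    refine Finset.sum_congr rfl fun pq hpq => ?_
    rw [(Finset.mem_filter.1 hpq).2]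
  have hCneg : ∀ c, c ∈ C → -c ∈ C := by
    intro c hc
    rcases Finset.mem_union.1 hc with h | h
    · exact Finset.mem_union_right _ (Finset.mem_image_of_mem _ h)
    · obtain ⟨d, hd, rfl⟩ := Finset.mem_image.1 h
      rw [neg_neg]
      exact Finset.mem_union_left _ hd
  have hAsymm : ∀ c : ℤ, A c = A (-c) := by
    intro c
    obtain ⟨j, rfl | rfl⟩ := c.eq_nat_or_neg
    · exact hAj j
    · rw [neg_neg]; exact (hAj j).symm
  have hzero : ∑ c ∈ C, (c : ℂ) * A c = 0 := by
    have hneg : ∑ c ∈ C, (((-c : ℤ) : ℂ)) * A (-c) = ∑ c ∈ C, (c : ℂ) * A c := by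
      refine Finset.sum_equiv (Equiv.neg ℤ) ?_ ?_
      · intro c
        simp only [Equiv.neg_apply]
        constructor
        · exact hCneg c
        · intro h
          have := hCneg _ h
          rwa [neg_neg] at this
      · intro c _
        simp only [Equiv.neg_apply]
    have hflip : ∑ c ∈ C, (((-c : ℤ) : ℂ)) * A (-c) = -∑ c ∈ C, (c : ℂ) * A c := by
      rw [← Finset.sum_neg_distrib]
      refine Finset.sum_congr rfl fun c _ => ?_
      rw [← hAsymm c]
      push_cast
      ring
    have h2 : ∑ c ∈ C, (c : ℂ) * A c = -∑ c ∈ C, (c : ℂ) * A c :=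
      hneg.symm.trans hflip
    linear_combination h2 / 2
  rw [hfib, hzero]


/-- Given a bigraded finite-dimensional complex vector space `V = ⊕ I^{p,q}`, a map `N` of
type `(-1,-1)`, and the semisimple operator `Y` acting by `p+q-k` on `I^{p,q}`, if each
`N^j : ⊕_{p+q=k+j} I^{p,q} → ⊕_{p+q=k-j} I^{p,q}` is an isomorphism, then there is a map
`N⁺` of type `(1,1)` such that `{N⁺, Y, N}` is an `sl₂`-triple. -/
theorem sl2_triple_completion
    (V : Type*) [AddCommGroup V] [Module ℂ V] [FiniteDimensional ℂ V]
    (I : ℤ × ℤ → Submodule ℂ V) (hI : DirectSum.IsInternal I)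
    (k : ℤ)
    (N Y : Module.End ℂ V)
    (hN : ∀ p q : ℤ, Submodule.map N (I (p, q)) ≤ I (p - 1, q - 1))
    (hY : ∀ p q : ℤ, ∀ v ∈ I (p, q), Y v = ((p + q - k : ℤ) : ℂ) • v)
    (hiso : ∀ j : ℕ,
      Submodule.map (N ^ j) (⨆ p : ℤ, ⨆ q : ℤ, ⨆ _ : p + q = k + j, I (p, q)) =
        (⨆ p : ℤ, ⨆ q : ℤ, ⨆ _ : p + q = k - j, I (p, q)) ∧
      (∀ x ∈ (⨆ p : ℤ, ⨆ q : ℤ, ⨆ _ : p + q = k + j, I (p, q)), (N ^ j) x = 0 → x = 0)) :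
    ∃ Nplus : Module.End ℂ V,
      (∀ p q : ℤ, Submodule.map Nplus (I (p, q)) ≤ I (p + 1, q + 1)) ∧
      Y * N - N * Y = (-2 : ℂ) • N ∧
      Y * Nplus - Nplus * Y = (2 : ℂ) • Nplus ∧
      Nplus * N - N * Nplus = Y := by
  classical
  have hNpow : ∀ (m : ℕ) (p q : ℤ), ∀ v ∈ I (p, q), (N ^ m) v ∈ I (p - m, q - m) := by
    intro m
    induction m with
    | zero => intro p q v hv; simpa using hv
    | succ m ih =>
      intro p q v hv
      have h1 : N v ∈ I (p - 1, q - 1) := hN p q ⟨v, hv, rfl⟩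
      have h2 := ih (p - 1) (q - 1) (N v) h1
      have heq : ((p : ℤ) - 1 - (m : ℤ), (q : ℤ) - 1 - (m : ℤ))
          = (p - ((m + 1 : ℕ) : ℤ), q - ((m + 1 : ℕ) : ℤ)) := by
        simp only [Prod.mk.injEq]
        constructor <;> push_cast <;> ring
      rw [pow_succ, Module.End.mul_apply, ← heq]
      exact h2
  have hkey : ∀ Z : Module.End ℂ V, N * Z = Z * N → LinearMap.trace ℂ V (Y * Z) = 0 :=
    fun Z hZ => key_trace I hI k N Y hNpow hY hiso Z hZ
  -- find a primitive `X` with `X * N - N * X = Y`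
  have hYmem : Y ∈ LinearMap.range
      ((LinearMap.mulRight ℂ N - LinearMap.mulLeft ℂ N :
        Module.End ℂ V →ₗ[ℂ] Module.End ℂ V)) := by
    by_contra hY0
    obtain ⟨φ, hφY, hφbot⟩ := Submodule.exists_dual_map_eq_bot_of_notMem hY0 inferInstance
    obtain ⟨Z, rfl⟩ := tracePairing_surjective φ
    have hvanish : ∀ X : Module.End ℂ V,
        LinearMap.trace ℂ V (X * (N * Z - Z * N)) = 0 := by
      intro X
      have hmem : (X * N - N * X) ∈ LinearMap.range
          ((LinearMap.mulRight ℂ N - LinearMap.mulLeft ℂ N :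
            Module.End ℂ V →ₗ[ℂ] Module.End ℂ V)) :=
        ⟨X, by simp [LinearMap.sub_apply, LinearMap.mulRight_apply, LinearMap.mulLeft_apply]⟩
      have h0 : tracePairing Z (X * N - N * X) = 0 := by
        have hin := Submodule.mem_map_of_mem (f := tracePairing Z) hmem
        rw [hφbot] at hin
        simpa using hin
      simp only [tracePairing, LinearMap.coe_mk, AddHom.coe_mk] at h0
      have h1 : LinearMap.trace ℂ V ((X * N) * Z) - LinearMap.trace ℂ V ((N * X) * Z) = 0 := by
        rw [← map_sub, ← sub_mul]
        exact h0
      have h2 : LinearMap.trace ℂ V ((N * X) * Z) = LinearMap.trace ℂ V (X * (Z * N)) := by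
        rw [mul_assoc, LinearMap.trace_mul_comm, mul_assoc]
      rw [mul_sub, map_sub, ← mul_assoc]
      rw [← h2]
      exact h1
    have hZcomm : N * Z = Z * N := by
      have hsub : N * Z - Z * N = 0 := by
        apply trace_form_nondegen
        intro g
        rw [LinearMap.trace_mul_comm]
        exact hvanish g
      have := sub_eq_zero.1 hsub
      exact this
    have hfinal := hkey Z hZcomm
    apply hφY
    simpa [tracePairing] using hfinal
  obtain ⟨X, hX0⟩ := hYmem
  have hX : X * N - N * X = Y := by
    simpa [LinearMap.sub_apply, LinearMap.mulRight_apply, LinearMap.mulLeft_apply] using hX0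
  -- define `N⁺` as the `(1,1)`-component of `X`
  set Np : Module.End ℂ V :=
    ∑ pq ∈ S I hI, (pr I hI (pq.1 + 1, pq.2 + 1)) ∘ₗ (X ∘ₗ pr I hI pq) with hNp
  have hNp_apply : ∀ (r s : ℤ) (v : V), v ∈ I (r, s) →
      Np v = pr I hI (r + 1, s + 1) (X v) := by
    intro r s v hv
    rw [hNp, LinearMap.sum_apply]
    by_cases hbot : I (r, s) = ⊥
    · have hv0 : v = 0 := by simpa [hbot] using hv
      simp [hv0]
    · rw [Finset.sum_eq_single (r, s)]
      · simp only [LinearMap.comp_apply]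
        rw [pr_of_mem I hI hv]
      · intro b _ hne
        simp only [LinearMap.comp_apply]
        rw [pr_of_mem_ne I hI (Ne.symm hne) hv]
        simp
      · intro h; exact absurd ((mem_S I hI).2 hbot) h
  refine ⟨Np, ?_, ?_, ?_, ?_⟩
  · -- type (1, 1)
    intro p q
    rw [Submodule.map_le_iff_le_comap]
    intro v hv
    rw [Submodule.mem_comap, hNp_apply p q v hv]
    exact pr_mem I hI _ _
  · -- [Y, N] = -2 N
    apply ext_on I hI ?_
    intro pq v hv
    obtain ⟨r, s⟩ := pq
    have h1 : N v ∈ I (r - 1, s - 1) := hN r s ⟨v, hv, rfl⟩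
    simp only [LinearMap.sub_apply, Module.End.mul_apply, LinearMap.smul_apply]
    rw [hY _ _ _ h1, hY r s v hv, map_smul, ← sub_smul]
    congr 1
    push_cast
    ring
  · -- [Y, N⁺] = 2 N⁺
    apply ext_on I hI ?_
    intro pq v hv
    obtain ⟨r, s⟩ := pq
    have h1 : Np v ∈ I (r + 1, s + 1) := by
      rw [hNp_apply r s v hv]; exact pr_mem I hI _ _
    simp only [LinearMap.sub_apply, Module.End.mul_apply, LinearMap.smul_apply]
    rw [hY _ _ _ h1, hY r s v hv, map_smul, ← sub_smul]
    congr 1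
    push_cast
    ring
  · -- [N⁺, N] = Y
    apply ext_on I hI ?_
    intro pq v hv
    obtain ⟨r, s⟩ := pq
    have h1 : N v ∈ I (r - 1, s - 1) := hN r s ⟨v, hv, rfl⟩
    simp only [LinearMap.sub_apply, Module.End.mul_apply]
    rw [hNp_apply _ _ _ h1, hNp_apply r s v hv]
    have e1 : ((r : ℤ) - 1 + 1, (s : ℤ) - 1 + 1) = (r, s) := by
      simp only [Prod.mk.injEq]; omega
    rw [e1]
    have hcomm := pr_comp_of_bidegree I hI N 1
      (fun p q v hv => hN p q ⟨v, hv, rfl⟩) (r + 1) (s + 1)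
    have e2 : ((r : ℤ) + 1 - 1, (s : ℤ) + 1 - 1) = (r, s) := by
      simp only [Prod.mk.injEq]; omega
    rw [e2] at hcomm
    have hcomm' := DFunLike.congr_fun hcomm (X v)
    simp only [LinearMap.comp_apply] at hcomm'
    rw [← hcomm']
    have hXv := DFunLike.congr_fun hX v
    simp only [LinearMap.sub_apply, Module.End.mul_apply] at hXv
    rw [← map_sub, hXv, hY r s v hv, map_smul, pr_of_mem I hI hv]
end
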